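/- If π is a martingale coupling on ℝ^d × ℝ^d with disintegration (π_x) with respect to the first marginal, then for μ-almost every x, the point x lies in the relative interior of the closed convex hull of the support of π_x. -/

import Mathlib

open MeasureTheory
open Filter Topology

/-- The (topological) support of a measure. -/
def msupport {α : Type*} [TopologicalSpace α] [MeasurableSpace α] (m : Measure α) : Set α :=
  {y | ∀ U : Set α, IsOpen U → y ∈ U → 0 < m U}

lemma msupport_compl_null {α : Type*} [TopologicalSpace α] [MeasurableSpace α]
    [SecondCountableTopology α] (m : Measure α) : m (msupport m)ᶜ = 0 := by
  have hcompl : (msupport m)ᶜ = ⋃₀ {U : Set α | IsOpen U ∧ m U = 0} := by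
    ext y
    simp only [Set.mem_compl_iff, msupport, Set.mem_setOf_eq, Set.mem_sUnion, not_forall]
    constructor
    · rintro ⟨U, hU, hyU, hpos⟩
      refine ⟨U, ⟨hU, ?_⟩, hyU⟩
      simpa [pos_iff_ne_zero, not_not] using hpos
    · rintro ⟨U, ⟨hU, hU0⟩, hyU⟩
      exact ⟨U, hU, hyU, by simp [hU0]⟩
  obtain ⟨T, hTc, hTsub, hTU⟩ :=
    TopologicalSpace.isOpen_sUnion_countable {U : Set α | IsOpen U ∧ m U = 0} (fun U hU => hU.1)
  rw [hcompl, ← hTU, measure_sUnion_null_iff hTc]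
  exact fun s hs => (hTsub hs).2

set_option maxHeartbeats 1000000 in
lemma bary_mem_intrinsicInterior {d : ℕ} (ρ : Measure (EuclideanSpace ℝ (Fin d)))
    [IsProbabilityMeasure ρ] (hint : Integrable (fun y => y) ρ) :
    (∫ y, y ∂ρ) ∈ intrinsicInterior ℝ (closure (convexHull ℝ (msupport ρ))) := by
  set E := EuclideanSpace ℝ (Fin d) with hE
  set S : Set E := msupport ρ with hS
  set C : Set E := closure (convexHull ℝ S) with hC
  set b : E := ∫ y, y ∂ρ with hb
  have hCc : Convex ℝ C := (convex_convexHull ℝ S).closure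
  have hCcl : IsClosed C := isClosed_closure
  have hSC : S ⊆ C := (subset_convexHull ℝ S).trans subset_closure
  have haeS : ∀ᵐ y ∂ρ, y ∈ S := by
    rw [ae_iff]
    exact msupport_compl_null ρ
  have hbC : b ∈ C := hCc.integral_mem hCcl (haeS.mono fun y hy => hSC hy) hint
  have hbA : b ∈ affineSpan ℝ C := subset_affineSpan ℝ C hbC
  have key : ∃ ε > 0, ∀ z : E, z ∈ affineSpan ℝ C → dist z b < ε → z ∈ C := by
    by_contra hcon
    push_neg at hcon
    choose z hzA hzd hzC using fun n : ℕ => hcon (1 / (n + 1)) (by positivity)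
    -- subspace and projection
    set V : Submodule ℝ E := (affineSpan ℝ C).direction with hV
    set P : E →L[ℝ] E := V.subtypeL.comp (V.orthogonalProjectionOnto) with hP
    have hPmem : ∀ x : E, P x ∈ V := fun x => (V.orthogonalProjectionOnto x).2
    have hPfix : ∀ x ∈ V, P x = x := by
      intro x hx
      have h1 : V.orthogonalProjectionOnto x = ⟨x, hx⟩ :=
        Submodule.orthogonalProjectionOnto_mem_subspace_eq_self (⟨x, hx⟩ : V)
      simp [hP, h1]
    have hzV : ∀ n, z n - b ∈ V :=
      fun n => (affineSpan ℝ C).vsub_mem_direction (hzA n) hbA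
    have hyV : ∀ y ∈ C, y - b ∈ V :=
      fun y hy => (affineSpan ℝ C).vsub_mem_direction (subset_affineSpan ℝ C hy) hbA
    -- separating functionals
    have hsep : ∀ n : ℕ, ∃ f : E →L[ℝ] ℝ, ∀ y ∈ C, f y < f (z n) := by
      intro n
      obtain ⟨f, u, h1, h2⟩ := geometric_hahn_banach_closed_point hCc hCcl (hzC n)
      exact ⟨f, fun y hy => (h1 y hy).trans h2⟩
    choose ℓ hℓ using hsep
    set g : ℕ → E →L[ℝ] ℝ := fun n => (ℓ n).comp P with hg
    have hgz : ∀ n, g n (z n - b) = ℓ n (z n) - ℓ n b := by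
      intro n
      have h0 : g n (z n - b) = ℓ n (P (z n - b)) := rfl
      rw [h0, hPfix _ (hzV n), map_sub]
    have hgpos : ∀ n, 0 < ‖g n‖ := by
      intro n
      have h1 : g n (z n - b) > 0 := by
        rw [hgz n]
        have := hℓ n b hbC
        linarith
      have h2 : g n ≠ 0 := by
        intro h0
        rw [h0] at h1
        simp at h1
      exact norm_pos_iff.mpr h2
    set f : ℕ → E →L[ℝ] ℝ := fun n => ‖g n‖⁻¹ • g n with hf
    have hfnorm : ∀ n, ‖f n‖ = 1 := fun n => norm_smul_inv_norm (by
      intro h0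
      exact absurd (by simp [h0] : ‖g n‖ = 0) (ne_of_gt (hgpos n)))
    have hfP : ∀ n x, f n (P x) = f n x := by
      intro n x
      simp [hf, hg, hPfix _ (hPmem x)]
    -- key bound
    have hbound : ∀ n, ∀ y ∈ C, f n (y - b) ≤ 1 / (n + 1) := by
      intro n y hy
      have h1 : g n (y - b) = ℓ n y - ℓ n b := by
        have h0 : g n (y - b) = ℓ n (P (y - b)) := rfl
        rw [h0, hPfix _ (hyV y hy), map_sub]
      have h2 : g n (y - b) ≤ g n (z n - b) := by
        rw [h1, hgz n]
        have := hℓ n y hy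
        linarith
      have h3 : g n (z n - b) ≤ ‖g n‖ * ‖z n - b‖ := by
        calc g n (z n - b) ≤ ‖g n (z n - b)‖ := le_abs_self _
        _ ≤ ‖g n‖ * ‖z n - b‖ := (g n).le_opNorm _
      have h4 : ‖z n - b‖ < 1 / (n + 1) := by
        have := hzd n
        rwa [dist_eq_norm] at this
      have h5 : f n (y - b) = ‖g n‖⁻¹ * g n (y - b) := by simp [hf]
      rw [h5]
      have h6 : ‖g n‖⁻¹ * g n (y - b) ≤ ‖g n‖⁻¹ * (‖g n‖ * ‖z n - b‖) := by
        apply mul_le_mul_of_nonneg_left (h2.trans h3) (by positivity)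
      have h7 : ‖g n‖⁻¹ * (‖g n‖ * ‖z n - b‖) = ‖z n - b‖ :=
        inv_mul_cancel_left₀ (ne_of_gt (hgpos n)) _
      linarith
    -- compactness
    have hcomp : IsCompact (Metric.sphere (0 : E →L[ℝ] ℝ) 1) := isCompact_sphere 0 1
    have hmem : ∀ n, f n ∈ Metric.sphere (0 : E →L[ℝ] ℝ) 1 := by
      intro n
      exact mem_sphere_zero_iff_norm.mpr (hfnorm n)
    obtain ⟨F, hFsph, φ, hφ, hFtend⟩ := hcomp.tendsto_subseq hmem
    have heval : ∀ x : E, Tendsto (fun k => f (φ k) x) atTop (𝓝 (F x)) := by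
      intro x
      exact ((ContinuousLinearMap.apply ℝ ℝ x).continuous.tendsto F).comp hFtend
    have htend0 : Tendsto (fun k => (1 : ℝ) / (φ k + 1)) atTop (𝓝 0) :=
      tendsto_one_div_add_atTop_nhds_zero_nat.comp hφ.tendsto_atTop
    have hFC : ∀ y ∈ C, F (y - b) ≤ 0 := by
      intro y hy
      exact le_of_tendsto_of_tendsto' (heval (y - b)) htend0
        (fun k => hbound (φ k) y hy)
    have hFP : ∀ x : E, F (P x) = F x := by
      intro x
      have h1 : Tendsto (fun k => f (φ k) (P x)) atTop (𝓝 (F (P x))) := heval (P x)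
      have h2 : Tendsto (fun k => f (φ k) (P x)) atTop (𝓝 (F x)) := by
        simpa only [hfP] using heval x
      exact tendsto_nhds_unique h1 h2
    -- measure argument
    have hint' : Integrable (fun y : E => y - b) ρ := hint.sub (integrable_const b)
    have hIzero : ∫ y, F (y - b) ∂ρ = 0 := by
      rw [F.integral_comp_comm hint']
      have : ∫ y : E, (y - b) ∂ρ = (∫ y : E, y ∂ρ) - b := by
        rw [integral_sub hint (integrable_const b)]
        simp
        rfl
      rw [this, ← hb, sub_self, map_zero]
    have hae0 : ∀ᵐ y ∂ρ, F (y - b) = 0 := by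
      have hFnn : 0 ≤ᵐ[ρ] fun y => -(F (y - b)) := by
        filter_upwards [haeS] with y hy
        simp only [Pi.zero_apply, neg_nonneg]
        exact hFC y (hSC hy)
      have hFint : Integrable (fun y : E => -(F (y - b))) ρ :=
        (F.integrable_comp hint').neg
      have h0 : ∫ y, -(F (y - b)) ∂ρ = 0 := by
        rw [integral_neg, hIzero, neg_zero]
      have := (integral_eq_zero_iff_of_nonneg_ae hFnn hFint).mp h0
      filter_upwards [this] with y hy
      exact neg_eq_zero.mp hy
    have hcont : Continuous (fun y : E => F (y - b)) :=
      F.continuous.comp (continuous_id.sub continuous_const)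
    have hSH : S ⊆ {y : E | F (y - b) = 0} := by
      intro s hs
      by_contra hne
      have hU : IsOpen {y : E | F (y - b) ≠ 0} := (isClosed_eq hcont continuous_const).isOpen_compl
      have hpos := hs _ hU hne
      have hzero : ρ {y : E | F (y - b) ≠ 0} = 0 := ae_iff.mp hae0
      rw [hzero] at hpos
      exact lt_irrefl 0 hpos
    have hHconv : Convex ℝ {y : E | F (y - b) = 0} := by
      intro x hx y hy a c ha hc hac
      have ha' : a = 1 - c := by linarith
      subst ha'
      have hxy : (1 - c) • x + c • y - b = (1 - c) • (x - b) + c • (y - b) := by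
        module
      simp only [Set.mem_setOf_eq] at hx hy ⊢
      rw [hxy]
      simp [hx, hy]
    have hHcl : IsClosed {y : E | F (y - b) = 0} := isClosed_eq hcont continuous_const
    have hCH : C ⊆ {y : E | F (y - b) = 0} :=
      closure_minimal (convexHull_min hSH hHconv) hHcl
    -- final contradiction
    have hFne : F ≠ 0 := by
      intro h0
      have : ‖F‖ = 1 := mem_sphere_zero_iff_norm.mp hFsph
      rw [h0] at this
      simp at this
    obtain ⟨x, hx⟩ : ∃ x : E, F x ≠ 0 := by
      by_contra hall
      push_neg at hall
      exact hFne (ContinuousLinearMap.ext fun x => by simp [hall x])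
    have hVker : V ≤ LinearMap.ker (F : E →ₗ[ℝ] ℝ) := by
      rw [hV, direction_affineSpan, vectorSpan_def]
      rw [Submodule.span_le]
      rintro u hu
      obtain ⟨y, hy, y', hy', rfl⟩ := hu
      have h1 : F (y - b) = 0 := hCH hy
      have h2 : F (y' - b) = 0 := hCH hy'
      simp only [SetLike.mem_coe, LinearMap.mem_ker]
      have h3 : y -ᵥ y' = (y - b) - (y' - b) := by
        rw [vsub_eq_sub]; abel
      show F (y -ᵥ y') = 0
      rw [h3, map_sub, h1, h2, sub_zero]
    have hPx : F (P x) = 0 := by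
      have := hVker (hPmem x)
      simpa using this
    rw [hFP x] at hPx
    exact hx hPx
  obtain ⟨ε, hε, hball⟩ := key
  rw [mem_intrinsicInterior]
  refine ⟨⟨b, hbA⟩, ?_, rfl⟩
  rw [mem_interior_iff_mem_nhds, Metric.mem_nhds_iff]
  refine ⟨ε, hε, fun w hw => ?_⟩
  exact hball w w.2 (by simpa [Subtype.dist_eq] using hw)

/-- For a martingale coupling `π` with disintegration `(π_x)`, for `μ`-a.e. `x` the point `x`
lies in the relative interior of the closed convex hull of the support of `π_x`. -/
theorem stmt3 (d : ℕ) (μ ν : Measure (EuclideanSpace ℝ (Fin d)))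
    [IsProbabilityMeasure μ] [IsProbabilityMeasure ν]
    (hμ : Integrable (fun x => x) μ) (hν : Integrable (fun x => x) ν)
    (π : Measure (EuclideanSpace ℝ (Fin d) × EuclideanSpace ℝ (Fin d)))
    [IsProbabilityMeasure π]
    (h1 : π.map Prod.fst = μ) (h2 : π.map Prod.snd = ν)
    (hmart : ∀ᵐ x ∂μ, ∫ y, y ∂(π.condKernel x) = x) :
    ∀ᵐ x ∂μ, x ∈ intrinsicInterior ℝ
      (closure (convexHull ℝ (msupport (π.condKernel x)))) := by
  have hν' : Integrable (fun x : EuclideanSpace ℝ (Fin d) => x) (π.map Prod.snd) := h2 ▸ hν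
  have hsnd : Integrable (fun p : EuclideanSpace ℝ (Fin d) × EuclideanSpace ℝ (Fin d) => p.2) π := by
    have := (integrable_map_measure hν'.aestronglyMeasurable measurable_snd.aemeasurable).mp hν'
    exact this
  have hfst : π.fst = μ := by
    rw [Measure.fst]; exact h1
  have hker := hsnd.condKernel_ae
  rw [hfst] at hker
  filter_upwards [hmart, hker] with x hx hintx
  have hi : Integrable (fun y : EuclideanSpace ℝ (Fin d) => y) (π.condKernel x) := hintx
  have := bary_mem_intrinsicInterior (π.condKernel x) hi
  rwa [hx] at this
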